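/- Let Δ = {(r_0,…,r_l) ∈ [0,1]^{l+1} : r_0⋯r_m = |π|}. For special monomials a = a_n t^n and a' = a'_{n'} t^{n'} in A = k°[t_0,…,t_l]/(t_0⋯t_m − π), the divisibility a' ∈ aA holds if and only if |a|_r ≥ |a'|_r for all r ∈ Δ, where |a_n t^n|_r = |a_n| r_0^{n_0}⋯r_l^{n_l}. -/

import Mathlib

open scoped NNReal
open MvPolynomial

noncomputable section

namespace Altered

variable {k : Type*} [Field k]

/-- The defining ideal (t₀⋯t_m - π) of a model semistable scheme. -/
def modelIdeal (v : Valuation k ℝ≥0) (l m : ℕ) (π : v.integer) :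
    Ideal (MvPolynomial (Fin (l + 1)) v.integer) :=
  Ideal.span
    {(∏ i ∈ Finset.univ.filter (fun i : Fin (l + 1) => (i : ℕ) ≤ m), X i) - C π}

/-- The coordinate ring A = k°[t₀,…,t_l]/(t₀⋯t_m − π) of a model semistable scheme. -/
abbrev ModelRing (v : Valuation k ℝ≥0) (l m : ℕ) (π : v.integer) :=
  MvPolynomial (Fin (l + 1)) v.integer ⧸ modelIdeal v l m π

variable (v : Valuation k ℝ≥0) (l m : ℕ) (π : v.integer)

/-- An exponent tuple n ∈ ℤ^m × ℕ^(l-m): index j : Fin l stands for the variable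
t_{j+1}, and exponents of t_{j+1} for j ≥ m must be nonnegative. -/
def IsSpecialIndex (n : Fin l → ℤ) : Prop := ∀ j : Fin l, m ≤ (j : ℕ) → 0 ≤ n j

/-- D(n) = −min(0, n₁,…,n_m). -/
def negDeg (n : Fin l → ℤ) : ℕ :=
  (Finset.univ.filter (fun j : Fin l => (j : ℕ) < m)).sup fun j => (-n j).toNat

/-- The special monomial a_n t^n with coefficient a_n = b·π^{D(n)}
(so that the bound |a_n| ≤ |π|^{−min(0,n₁,…,n_m)} holds automatically),
written as an honest element of A: b·π^{D}·t^n = b·t₀^D·∏_{1≤i≤m} t_i^{n_i+D}·∏_{i>m} t_i^{n_i}. -/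
def specialMonomial (b : v.integer) (n : Fin l → ℤ) : ModelRing v l m π :=
  Ideal.Quotient.mk (modelIdeal v l m π)
    (C b * X (0 : Fin (l + 1)) ^ negDeg l m n *
      ∏ j : Fin l, X j.succ ^
        (if (j : ℕ) < m then (n j + negDeg l m n).toNat else (n j).toNat))

/-- The set Δ of monomial semivaluation parameters:
r ∈ [0,1]^{l+1} with r₀⋯r_m = |π|. -/
def Delta : Set (Fin (l + 1) → ℝ≥0) :=
  {r | (∀ i, r i ≤ 1) ∧
    ∏ i ∈ Finset.univ.filter (fun i : Fin (l + 1) => (i : ℕ) ≤ m), r i = v (π : k)}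

/-- The value |a_n t^n|_r = |a_n|·r^n of the special monomial with coefficient
a_n = b·π^{D(n)} at r ∈ Δ.  (On Δ, r_i ≠ 0 whenever a negative exponent occurs.) -/
def monValue (b : v.integer) (n : Fin l → ℤ) (r : Fin (l + 1) → ℝ≥0) : ℝ≥0 :=
  v (b : k) * v (π : k) ^ (negDeg l m n : ℤ) * ∏ j : Fin l, r j.succ ^ (n j)


set_option maxHeartbeats 1000000
set_option synthInstance.maxHeartbeats 200000

lemma prod_filter_le_split {M : Type*} [CommMonoid M] (f : Fin (l + 1) → M) :
    ∏ i ∈ Finset.univ.filter (fun i : Fin (l + 1) => (i : ℕ) ≤ m), f i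
      = f 0 * ∏ j : Fin l, (if (j : ℕ) < m then f j.succ else 1) := by
  rw [Finset.prod_filter, Fin.prod_univ_succ]
  simp only [Fin.val_zero, Nat.zero_le, if_true, Fin.val_succ]
  congr 1

lemma toNat_le_negDeg (n : Fin l → ℤ) (j : Fin l) (hj : (j : ℕ) < m) :
    (-n j).toNat ≤ negDeg l m n :=
  Finset.le_sup (f := fun j => (-n j).toNat) (by simp [hj])

lemma negDeg_nonneg_add (n : Fin l → ℤ) (j : Fin l) (hj : (j : ℕ) < m) :
    0 ≤ n j + negDeg l m n := by
  have := toNat_le_negDeg l m n j hj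
  omega

lemma negDeg_add_le (n e : Fin l → ℤ) :
    negDeg l m (n + e) ≤ negDeg l m n + negDeg l m e := by
  apply Finset.sup_le
  intro j hj
  simp only [Finset.mem_filter] at hj
  have h1 := toNat_le_negDeg l m n j hj.2
  have h2 := toNat_le_negDeg l m e j hj.2
  simp only [Pi.add_apply]
  omega


lemma prod_pow_merge (f g : Fin l → ℕ) :
    (∏ j : Fin l, (X j.succ : MvPolynomial (Fin (l + 1)) v.integer) ^ f j)
      * ∏ j : Fin l, (X j.succ : MvPolynomial (Fin (l + 1)) v.integer) ^ g j
      = ∏ j : Fin l, (X j.succ : MvPolynomial (Fin (l + 1)) v.integer) ^ (f j + g j) := by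
  rw [← Finset.prod_mul_distrib]
  exact Finset.prod_congr rfl fun j _ => (pow_add _ _ _).symm

lemma mk_rel :
    Ideal.Quotient.mk (modelIdeal v l m π)
      (X (0 : Fin (l + 1)) * ∏ j : Fin l, (if (j : ℕ) < m then X j.succ else 1))
      = Ideal.Quotient.mk (modelIdeal v l m π) (C π) := by
  rw [← prod_filter_le_split]
  exact Ideal.Quotient.eq.mpr (Ideal.subset_span (Set.mem_singleton _))

set_option maxHeartbeats 1000000 in
lemma specialMonomial_mul (b c : v.integer) (n e : Fin l → ℤ)
    (hn : IsSpecialIndex l m n) (he : IsSpecialIndex l m e) :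
    specialMonomial v l m π b n * specialMonomial v l m π c e =
      specialMonomial v l m π
        (b * c * π ^ (negDeg l m n + negDeg l m e - negDeg l m (n + e))) (n + e) := by
  have hFle : negDeg l m (n + e) ≤ negDeg l m n + negDeg l m e := negDeg_add_le l m n e
  unfold specialMonomial
  rw [← map_mul]
  set D := negDeg l m n with hD
  set E := negDeg l m e with hE
  set F := negDeg l m (n + e) with hF
  set s := D + E - F with hs
  have key :
      (C b * X (0 : Fin (l + 1)) ^ D *
          ∏ j : Fin l, X j.succ ^ (if (j : ℕ) < m then (n j + D).toNat else (n j).toNat))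
        * (C c * X (0 : Fin (l + 1)) ^ E *
          ∏ j : Fin l, X j.succ ^ (if (j : ℕ) < m then (e j + E).toNat else (e j).toNat))
      = (X (0 : Fin (l + 1)) * ∏ j : Fin l, (if (j : ℕ) < m then X j.succ else 1)) ^ s
        * (C (b * c) * X (0 : Fin (l + 1)) ^ F *
          ∏ j : Fin l, X j.succ ^
            (if (j : ℕ) < m then ((n + e) j + F).toNat else ((n + e) j).toNat)) := by
    have hQ : (∏ j : Fin l,
          (if (j : ℕ) < m then (X j.succ : MvPolynomial (Fin (l + 1)) v.integer) else 1)) ^ s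
        = ∏ j : Fin l, (X j.succ : MvPolynomial (Fin (l + 1)) v.integer) ^
            (if (j : ℕ) < m then s else 0) := by
      rw [← Finset.prod_pow]
      refine Finset.prod_congr rfl fun j _ => ?_
      by_cases h : (j : ℕ) < m <;> simp [h]
    have e1 := prod_pow_merge v l (fun j => if (j : ℕ) < m then (n j + D).toNat else (n j).toNat)
      (fun j => if (j : ℕ) < m then (e j + E).toNat else (e j).toNat)
    have e3 := prod_pow_merge v l (fun j => if (j : ℕ) < m then s else 0)
      (fun j => if (j : ℕ) < m then ((n + e) j + F).toNat else ((n + e) j).toNat)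
    have e4 : ∏ j : Fin l, (X j.succ : MvPolynomial (Fin (l + 1)) v.integer) ^
          ((if (j : ℕ) < m then (n j + D).toNat else (n j).toNat)
            + (if (j : ℕ) < m then (e j + E).toNat else (e j).toNat))
        = ∏ j : Fin l, (X j.succ : MvPolynomial (Fin (l + 1)) v.integer) ^
          ((if (j : ℕ) < m then s else 0)
            + (if (j : ℕ) < m then ((n + e) j + F).toNat else ((n + e) j).toNat)) := by
      refine Finset.prod_congr rfl fun j _ => ?_
      congr 1
      by_cases h : (j : ℕ) < m
      · have h1 := toNat_le_negDeg l m n j h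
        have h2 := toNat_le_negDeg l m e j h
        have h3 := toNat_le_negDeg l m (n + e) j h
        simp only [if_pos h, Pi.add_apply] at *
        omega
      · have h1 := hn j (by omega)
        have h2 := he j (by omega)
        simp only [if_neg h, Pi.add_apply]
        omega
    have hDE : D + E = s + F := by omega
    calc
      (C b * X (0 : Fin (l + 1)) ^ D *
          ∏ j : Fin l, X j.succ ^ (if (j : ℕ) < m then (n j + D).toNat else (n j).toNat))
        * (C c * X (0 : Fin (l + 1)) ^ E *
          ∏ j : Fin l, X j.succ ^ (if (j : ℕ) < m then (e j + E).toNat else (e j).toNat))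
          = C (b * c) * (X (0 : Fin (l + 1)) ^ D * X (0 : Fin (l + 1)) ^ E) *
            ((∏ j : Fin l, X j.succ ^ (if (j : ℕ) < m then (n j + D).toNat else (n j).toNat))
              * ∏ j : Fin l, X j.succ ^ (if (j : ℕ) < m then (e j + E).toNat else (e j).toNat)) := by
            rw [C_mul]; ring
      _ = C (b * c) * X (0 : Fin (l + 1)) ^ (s + F) *
            ∏ j : Fin l, (X j.succ : MvPolynomial (Fin (l + 1)) v.integer) ^
              ((if (j : ℕ) < m then s else 0)
                + (if (j : ℕ) < m then ((n + e) j + F).toNat else ((n + e) j).toNat)) := by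
            rw [← pow_add, hDE, e1, e4]
      _ = (X (0 : Fin (l + 1)) * ∏ j : Fin l, (if (j : ℕ) < m then X j.succ else 1)) ^ s
          * (C (b * c) * X (0 : Fin (l + 1)) ^ F *
            ∏ j : Fin l, X j.succ ^
              (if (j : ℕ) < m then ((n + e) j + F).toNat else ((n + e) j).toNat)) := by
            rw [mul_pow, hQ, ← e3, pow_add]; ring
  rw [key, map_mul, map_pow, mk_rel, ← map_pow, ← map_mul]
  congr 1
  simp only [C_mul, C_pow]
  ring

/-- Lift an evaluation to the quotient ring. -/
lemma exists_evalHom {R : Type*} [CommRing R] (f : v.integer →+* R) (vals : Fin (l + 1) → R)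
    (hrel : ∏ i ∈ Finset.univ.filter (fun i : Fin (l + 1) => (i : ℕ) ≤ m), vals i = f π) :
    ∃ φ : ModelRing v l m π →+* R,
      ∀ p, φ (Ideal.Quotient.mk (modelIdeal v l m π) p) = eval₂Hom f vals p := by
  have hker : ∀ a ∈ modelIdeal v l m π, eval₂Hom f vals a = 0 := by
    intro a ha
    rw [modelIdeal, Ideal.mem_span_singleton] at ha
    obtain ⟨q, rfl⟩ := ha
    rw [map_mul]
    have h0 : eval₂Hom f vals
        ((∏ i ∈ Finset.univ.filter (fun i : Fin (l + 1) => (i : ℕ) ≤ m), X i) - C π) = 0 := by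
      rw [map_sub, map_prod]
      simp only [eval₂Hom_X', eval₂Hom_C]
      rw [hrel, sub_self]
    rw [h0, zero_mul]
  exact ⟨Ideal.Quotient.lift _ (eval₂Hom f vals) hker, fun p => rfl⟩

lemma eval_specialMonomial {R : Type*} [CommRing R] (f : v.integer →+* R)
    (vals : Fin (l + 1) → R) (b : v.integer) (n : Fin l → ℤ) :
    eval₂Hom f vals
        (C b * X (0 : Fin (l + 1)) ^ negDeg l m n *
          ∏ j : Fin l, X j.succ ^
            (if (j : ℕ) < m then (n j + negDeg l m n).toNat else (n j).toNat))
      = f b * vals 0 ^ negDeg l m n *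
          ∏ j : Fin l, vals j.succ ^
            (if (j : ℕ) < m then (n j + negDeg l m n).toNat else (n j).toNat) := by
  rw [map_mul, map_mul, map_pow, map_prod]
  simp only [eval₂Hom_X', eval₂Hom_C, map_pow]

/-- divisibility forces exponent comparison at indices ≥ m -/
lemma cond_i_of_dvd (hπ : π ≠ 0) (b b' : v.integer) (hb : b ≠ 0) (hb' : b' ≠ 0)
    (n n' : Fin l → ℤ) (hn : IsSpecialIndex l m n) (hn' : IsSpecialIndex l m n')
    (hdvd : specialMonomial v l m π b n ∣ specialMonomial v l m π b' n')
    (j₀ : Fin l) (hj₀ : m ≤ (j₀ : ℕ)) : n j₀ ≤ n' j₀ := by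
  classical
  set vals : Fin (l + 1) → Polynomial v.integer :=
    fun i => if i = 0 then Polynomial.C π else if i = j₀.succ then Polynomial.X else 1 with hvals
  have hrel : ∏ i ∈ Finset.univ.filter (fun i : Fin (l + 1) => (i : ℕ) ≤ m), vals i
      = Polynomial.C π := by
    rw [prod_filter_le_split]
    have h0 : vals 0 = Polynomial.C π := by simp [hvals]
    have h1 : ∀ j : Fin l, (if (j : ℕ) < m then vals j.succ else 1) = 1 := by
      intro j
      by_cases h : (j : ℕ) < m
      · rw [if_pos h, hvals]
        have hne0 : (j.succ : Fin (l + 1)) ≠ 0 := Fin.succ_ne_zero j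
        have hnej : (j.succ : Fin (l + 1)) ≠ j₀.succ := by
          intro hc
          have := Fin.succ_injective _ hc
          subst this
          omega
        simp [hne0, hnej]
      · rw [if_neg h]
    rw [h0, Finset.prod_congr rfl fun j _ => h1 j]
    simp
  obtain ⟨φ, hφ⟩ := exists_evalHom v l m π Polynomial.C vals hrel
  have heval : ∀ (c : v.integer) (e : Fin l → ℤ),
      φ (specialMonomial v l m π c e)
        = Polynomial.C (c * π ^ negDeg l m e) * Polynomial.X ^ (e j₀).toNat := by
    intro c e
    rw [specialMonomial, hφ, eval_specialMonomial]
    have h0 : vals 0 = Polynomial.C π := by simp [hvals]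
    have hprod : ∏ j : Fin l, vals j.succ ^
          (if (j : ℕ) < m then (e j + negDeg l m e).toNat else (e j).toNat)
        = Polynomial.X ^ (e j₀).toNat := by
      rw [Finset.prod_eq_single j₀]
      · have hx : vals j₀.succ = Polynomial.X := by
          simp [hvals, Fin.succ_ne_zero j₀]
        rw [hx, if_neg (by omega)]
      · intro j _ hj
        have hne0 : (j.succ : Fin (l + 1)) ≠ 0 := Fin.succ_ne_zero j
        have hnej : (j.succ : Fin (l + 1)) ≠ j₀.succ := fun hc => hj (Fin.succ_injective _ hc)
        simp [hvals, hne0, hnej]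
      · simp
    rw [h0, hprod, ← Polynomial.C_pow, ← Polynomial.C_mul]
  have hdvd2 := map_dvd φ hdvd
  rw [heval, heval] at hdvd2
  obtain ⟨q, hq⟩ := hdvd2
  have hcn : b * π ^ negDeg l m n ≠ 0 := mul_ne_zero hb (pow_ne_zero _ hπ)
  have hcn' : b' * π ^ negDeg l m n' ≠ 0 := mul_ne_zero hb' (pow_ne_zero _ hπ)
  have hL : (Polynomial.C (b * π ^ negDeg l m n) * Polynomial.X ^ (n j₀).toNat :
      Polynomial v.integer) ≠ 0 :=
    mul_ne_zero (Polynomial.C_ne_zero.mpr hcn) (pow_ne_zero _ Polynomial.X_ne_zero)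
  have hq0 : q ≠ 0 := by
    rintro rfl
    rw [mul_zero] at hq
    exact mul_ne_zero (Polynomial.C_ne_zero.mpr hcn')
      (pow_ne_zero _ Polynomial.X_ne_zero) hq
  have hd : (n' j₀).toNat = (n j₀).toNat + q.natDegree := by
    have h1 := Polynomial.natDegree_C_mul_X_pow ((n' j₀).toNat) _ hcn'
    have h2 := Polynomial.natDegree_C_mul_X_pow ((n j₀).toNat) _ hcn
    calc (n' j₀).toNat
        = (Polynomial.C (b' * π ^ negDeg l m n') * Polynomial.X ^ (n' j₀).toNat).natDegree :=
          h1.symm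
      _ = (Polynomial.C (b * π ^ negDeg l m n) * Polynomial.X ^ (n j₀).toNat * q).natDegree := by
          rw [hq]
      _ = (n j₀).toNat + q.natDegree := by
          rw [Polynomial.natDegree_mul hL hq0, h2]
  have hnj := hn j₀ hj₀
  have hnj' := hn' j₀ hj₀
  omega

lemma pow_cancel_le {x u w : ℝ≥0} (hx : x ≠ 0) {a b c d : ℕ} (hE : a + d = b + c)
    (h : u * x ^ a ≤ w * x ^ b) : u * x ^ c ≤ w * x ^ d := by
  have h2 : u * x ^ c * x ^ b ≤ w * x ^ d * x ^ b := by
    have e1 : u * x ^ c * x ^ b = u * x ^ a * x ^ d := by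
      rw [mul_assoc, mul_assoc, ← pow_add, ← pow_add]
      congr 2
      omega
    have e2 : w * x ^ d * x ^ b = w * x ^ b * x ^ d := by ring
    rw [e1, e2]
    exact mul_le_mul_left h _
  exact le_of_mul_le_mul_right h2 (pos_iff_ne_zero.mpr (pow_ne_zero _ hx))

lemma coe_pi_ne_zero (hπ : π ≠ 0) : v (π : k) ≠ 0 := by
  rw [Valuation.ne_zero_iff]
  exact fun h => hπ (Subtype.ext h)

lemma cond_ii_of_dvd (hπ : π ≠ 0) (b b' : v.integer) (n n' : Fin l → ℤ)
    (hdvd : specialMonomial v l m π b n ∣ specialMonomial v l m π b' n') :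
    v (b' : k) * v (π : k) ^ negDeg l m n'
      ≤ v (b : k) * v (π : k) ^ (negDeg l m n + negDeg l m (n' - n)) := by
  classical
  have hπk : v (π : k) ≠ 0 := coe_pi_ne_zero v π hπ
  by_cases hS : negDeg l m (n' - n) = 0
  · -- evaluate t₀ ↦ π, everything else ↦ 1
    set vals : Fin (l + 1) → v.integer := fun i => if i = 0 then π else 1 with hvals
    have hrel : ∏ i ∈ Finset.univ.filter (fun i : Fin (l + 1) => (i : ℕ) ≤ m), vals i
        = RingHom.id v.integer π := by
      rw [prod_filter_le_split]
      have h0 : vals 0 = π := by simp [hvals]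
      have h1 : ∀ j : Fin l, (if (j : ℕ) < m then vals j.succ else 1) = 1 := by
        intro j
        by_cases h : (j : ℕ) < m
        · rw [if_pos h, hvals]
          simp [Fin.succ_ne_zero j]
        · rw [if_neg h]
      rw [h0, Finset.prod_congr rfl fun j _ => h1 j]
      simp
    obtain ⟨φ, hφ⟩ := exists_evalHom v l m π (RingHom.id v.integer) vals hrel
    have heval : ∀ (c : v.integer) (e : Fin l → ℤ),
        φ (specialMonomial v l m π c e) = c * π ^ negDeg l m e := by
      intro c e
      rw [specialMonomial, hφ, eval_specialMonomial]
      have h0 : vals 0 = π := by simp [hvals]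
      have hprod : ∏ j : Fin l, vals j.succ ^
            (if (j : ℕ) < m then (e j + negDeg l m e).toNat else (e j).toNat) = 1 := by
        refine Finset.prod_eq_one fun j _ => ?_
        have : vals j.succ = 1 := by simp [hvals, Fin.succ_ne_zero j]
        rw [this, one_pow]
      rw [h0, hprod, mul_one]
      rfl
    have hdvd2 := map_dvd φ hdvd
    rw [heval, heval] at hdvd2
    have hval := (Valuation.integer.integers v).le_of_dvd hdvd2
    push_cast at hval
    rw [map_mul, map_mul, map_pow, map_pow] at hval
    rw [hS, add_zero]
    exact hval
  · -- there is an index j₀ < m attaining the sup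
    have hne : (Finset.univ.filter (fun j : Fin l => (j : ℕ) < m)).Nonempty := by
      by_contra h
      rw [Finset.not_nonempty_iff_eq_empty] at h
      rw [negDeg, h, Finset.sup_empty] at hS
      exact hS rfl
    obtain ⟨j₀, hj₀mem, hj₀⟩ :=
      Finset.exists_mem_eq_sup _ hne (fun j : Fin l => (-(n' - n) j).toNat)
    have hj₀m : (j₀ : ℕ) < m := (Finset.mem_filter.mp hj₀mem).2
    have hj₀sup : negDeg l m (n' - n) = (n j₀ - n' j₀).toNat := by
      rw [negDeg, hj₀]
      congr 1
      simp [Pi.sub_apply]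
    set vals : Fin (l + 1) → v.integer := fun i => if i = j₀.succ then π else 1 with hvals
    have hrel : ∏ i ∈ Finset.univ.filter (fun i : Fin (l + 1) => (i : ℕ) ≤ m), vals i
        = RingHom.id v.integer π := by
      rw [prod_filter_le_split]
      have h0 : vals 0 = 1 := by
        simp [hvals, (Fin.succ_ne_zero j₀).symm]
      rw [h0, one_mul, Finset.prod_eq_single j₀]
      · simp [hvals, hj₀m]
      · intro j _ hj
        by_cases h : (j : ℕ) < m
        · rw [if_pos h, hvals]
          have : (j.succ : Fin (l + 1)) ≠ j₀.succ := fun hc => hj (Fin.succ_injective _ hc)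
          simp [this]
        · rw [if_neg h]
      · simp
    obtain ⟨φ, hφ⟩ := exists_evalHom v l m π (RingHom.id v.integer) vals hrel
    have heval : ∀ (c : v.integer) (e : Fin l → ℤ),
        φ (specialMonomial v l m π c e) = c * π ^ (e j₀ + negDeg l m e).toNat := by
      intro c e
      rw [specialMonomial, hφ, eval_specialMonomial]
      have h0 : vals 0 = 1 := by simp [hvals, (Fin.succ_ne_zero j₀).symm]
      have hprod : ∏ j : Fin l, vals j.succ ^
            (if (j : ℕ) < m then (e j + negDeg l m e).toNat else (e j).toNat)
          = π ^ (e j₀ + negDeg l m e).toNat := by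
        rw [Finset.prod_eq_single j₀]
        · have hx : vals j₀.succ = π := by simp [hvals]
          rw [hx, if_pos hj₀m]
        · intro j _ hj
          have : vals j.succ = 1 := by
            have hne' : (j.succ : Fin (l + 1)) ≠ j₀.succ := fun hc => hj (Fin.succ_injective _ hc)
            simp [hvals, hne']
          rw [this, one_pow]
        · simp
      rw [h0, hprod, one_pow, mul_one]
      rfl
    have hdvd2 := map_dvd φ hdvd
    rw [heval, heval] at hdvd2
    have hval := (Valuation.integer.integers v).le_of_dvd hdvd2
    push_cast at hval
    rw [map_mul, map_mul, map_pow, map_pow] at hval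
    refine pow_cancel_le hπk ?_ hval
    -- exponent bookkeeping
    have e1 : ((n' j₀ + negDeg l m n').toNat : ℤ) = negDeg l m n' + n' j₀ := by
      have := negDeg_nonneg_add l m n' j₀ hj₀m
      omega
    have e2 : ((n j₀ + negDeg l m n).toNat : ℤ)
        = negDeg l m n + (negDeg l m (n' - n) : ℤ) + n' j₀ := by
      have h1 := negDeg_nonneg_add l m n j₀ hj₀m
      have h2 : (negDeg l m (n' - n) : ℤ) = n j₀ - n' j₀ := by
        rw [hj₀sup] at hS ⊢
        omega
      omega
    omega

lemma zpow_cancel_le {x u w : ℝ≥0} (hx : x ≠ 0) {a b c d : ℤ} (hE : a + d = b + c)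
    (h : u * x ^ a ≤ w * x ^ b) : u * x ^ c ≤ w * x ^ d := by
  have h2 : u * x ^ c * x ^ b ≤ w * x ^ d * x ^ b := by
    have e1 : u * x ^ c * x ^ b = u * x ^ a * x ^ d := by
      rw [mul_assoc, mul_assoc, ← zpow_add₀ hx, ← zpow_add₀ hx]
      congr 2
      omega
    have e2 : w * x ^ d * x ^ b = w * x ^ b * x ^ d := by ring
    rw [e1, e2]
    exact mul_le_mul_left h _
  exact le_of_mul_le_mul_right h2 (zpow_pos (pos_iff_ne_zero.mpr hx) b)

/-- conditions imply divisibility -/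
lemma dvd_of_conditions (hπ : π ≠ 0) (b b' : v.integer) (hb : b ≠ 0)
    (n n' : Fin l → ℤ) (hn : IsSpecialIndex l m n) (hn' : IsSpecialIndex l m n')
    (hi : ∀ j : Fin l, m ≤ (j : ℕ) → n j ≤ n' j)
    (hii : v (b' : k) * v (π : k) ^ negDeg l m n'
      ≤ v (b : k) * v (π : k) ^ (negDeg l m n + negDeg l m (n' - n))) :
    specialMonomial v l m π b n ∣ specialMonomial v l m π b' n' := by
  have hπk : v (π : k) ≠ 0 := coe_pi_ne_zero v π hπ
  have hbk : (b : k) ≠ 0 := fun h => hb (Subtype.ext h)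
  have hπk' : (π : k) ≠ 0 := fun h => hπ (Subtype.ext h)
  have he : IsSpecialIndex l m (n' - n) := fun j hj => by
    have := hi j hj
    simp only [Pi.sub_apply]
    omega
  have hadd : n + (n' - n) = n' := by
    funext j
    simp
  have hD'le : negDeg l m n' ≤ negDeg l m n + negDeg l m (n' - n) := by
    have h2 := negDeg_add_le l m n (n' - n)
    rw [hadd] at h2
    exact h2
  set t : ℕ := negDeg l m n + negDeg l m (n' - n) - negDeg l m n' with ht
  have hble : v (b' : k) ≤ v (b : k) * v (π : k) ^ t := by
    have h2 := pow_cancel_le hπk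
      (a := negDeg l m n') (b := negDeg l m n + negDeg l m (n' - n)) (c := 0) (d := t)
      (by omega) hii
    rwa [pow_zero, mul_one] at h2
  have hden : (b : k) * (π : k) ^ t ≠ 0 := mul_ne_zero hbk (pow_ne_zero _ hπk')
  set c : v.integer := ⟨(b' : k) / ((b : k) * (π : k) ^ t), by
    rw [Valuation.mem_integer_iff, map_div₀, map_mul, map_pow]
    exact div_le_one_of_le₀ hble zero_le⟩ with hc
  have hbc : b * c * π ^ t = b' := by
    apply Subtype.ext
    push_cast
    rw [hc]
    show (b : k) * ((b' : k) / ((b : k) * (π : k) ^ t)) * (π : k) ^ t = b'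
    have : (b : k) * ((b' : k) / ((b : k) * (π : k) ^ t)) * (π : k) ^ t
        = b' * (((b : k) * (π : k) ^ t) / ((b : k) * (π : k) ^ t)) := by ring
    rw [this, div_self hden, mul_one]
  refine ⟨specialMonomial v l m π c (n' - n), ?_⟩
  rw [specialMonomial_mul v l m π b c n (n' - n) hn he, hadd, ← ht, hbc]

/-- conditions imply the pointwise inequality on Δ -/
lemma monValue_le_of_conditions (hπ : π ≠ 0) (b b' : v.integer)
    (n n' : Fin l → ℤ) (hn : IsSpecialIndex l m n) (hn' : IsSpecialIndex l m n')
    (hi : ∀ j : Fin l, m ≤ (j : ℕ) → n j ≤ n' j)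
    (hii : v (b' : k) * v (π : k) ^ negDeg l m n'
      ≤ v (b : k) * v (π : k) ^ (negDeg l m n + negDeg l m (n' - n)))
    (r : Fin (l + 1) → ℝ≥0) (hr : r ∈ Delta v l m π) :
    monValue v l m π b' n' r ≤ monValue v l m π b n r := by
  classical
  obtain ⟨hr1, hr2⟩ := hr
  have hπk : v (π : k) ≠ 0 := coe_pi_ne_zero v π hπ
  set x := v (π : k) with hx
  set S := Finset.univ.filter (fun j : Fin l => (j : ℕ) < m) with hSdef
  have hrpos : ∀ j ∈ S, r j.succ ≠ 0 := by
    intro j hj h0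
    apply hπk
    rw [← hr2]
    refine Finset.prod_eq_zero (i := j.succ) ?_ h0
    have hjm := (Finset.mem_filter.mp hj).2
    simp only [Finset.mem_filter, Finset.mem_univ, true_and, Fin.val_succ]
    omega
  have hQ : x ≤ ∏ j ∈ S, r j.succ := by
    have hsplit := prod_filter_le_split (l := l) (m := m) r
    rw [hr2] at hsplit
    have hQ2 : ∏ j : Fin l, (if (j : ℕ) < m then r j.succ else 1) = ∏ j ∈ S, r j.succ :=
      (Finset.prod_filter _ _).symm
    rw [hQ2] at hsplit
    calc x = r 0 * ∏ j ∈ S, r j.succ := hsplit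
      _ ≤ 1 * ∏ j ∈ S, r j.succ := mul_le_mul_left (hr1 0) _
      _ = ∏ j ∈ S, r j.succ := one_mul _
  have claim2 : x ^ ((negDeg l m (n' - n) : ℕ) : ℤ) * ∏ j ∈ S, r j.succ ^ (n' j)
      ≤ ∏ j ∈ S, r j.succ ^ (n j) := by
    have hsplitprod : ∏ j ∈ S, r j.succ ^ (n j)
        = (∏ j ∈ S, r j.succ ^ (n' j)) * ∏ j ∈ S, r j.succ ^ (n j - n' j) := by
      rw [← Finset.prod_mul_distrib]
      refine Finset.prod_congr rfl fun j hj => ?_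
      rw [← zpow_add₀ (hrpos j hj)]
      congr 1
      omega
    have key : x ^ ((negDeg l m (n' - n) : ℕ) : ℤ) ≤ ∏ j ∈ S, r j.succ ^ (n j - n' j) := by
      calc x ^ ((negDeg l m (n' - n) : ℕ) : ℤ) = x ^ (negDeg l m (n' - n)) :=
            zpow_natCast _ _
        _ ≤ (∏ j ∈ S, r j.succ) ^ (negDeg l m (n' - n)) :=
            pow_le_pow_left₀ zero_le hQ _
        _ = ∏ j ∈ S, r j.succ ^ (negDeg l m (n' - n)) := (Finset.prod_pow _ _ _).symm
        _ = ∏ j ∈ S, r j.succ ^ ((negDeg l m (n' - n) : ℕ) : ℤ) :=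
            Finset.prod_congr rfl fun j _ => (zpow_natCast _ _).symm
        _ ≤ ∏ j ∈ S, r j.succ ^ (n j - n' j) := by
            refine Finset.prod_le_prod' fun j hj => ?_
            refine zpow_le_zpow_right_of_le_one₀
              (pos_iff_ne_zero.mpr (hrpos j hj)) (hr1 _) ?_
            have hjm := (Finset.mem_filter.mp hj).2
            have h2 := toNat_le_negDeg l m (n' - n) j hjm
            simp only [Pi.sub_apply] at h2
            omega
    rw [hsplitprod, mul_comm]
    exact mul_le_mul_right key _
  have claim1 : ∏ j ∈ Finset.univ.filter (fun j : Fin l => ¬ (j : ℕ) < m), r j.succ ^ (n' j)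
      ≤ ∏ j ∈ Finset.univ.filter (fun j : Fin l => ¬ (j : ℕ) < m), r j.succ ^ (n j) := by
    refine Finset.prod_le_prod' fun j hj => ?_
    have hjm : m ≤ (j : ℕ) := by
      have := (Finset.mem_filter.mp hj).2
      omega
    have h0 := hn j hjm
    have h1 := hi j hjm
    have e1 : r j.succ ^ (n' j) = r j.succ ^ ((n' j).toNat) := by
      rw [← zpow_natCast]
      congr 1
      omega
    have e2 : r j.succ ^ (n j) = r j.succ ^ ((n j).toNat) := by
      rw [← zpow_natCast]
      congr 1
      omega
    rw [e1, e2]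
    exact pow_le_pow_of_le_one zero_le (hr1 _) (by omega)
  have hii' : v (b' : k) * x ^ ((negDeg l m n' : ℕ) : ℤ)
      ≤ v (b : k) * x ^ ((negDeg l m n : ℕ) : ℤ) * x ^ ((negDeg l m (n' - n) : ℕ) : ℤ) := by
    rw [zpow_natCast, zpow_natCast, zpow_natCast, mul_assoc, ← pow_add]
    exact hii
  rw [monValue, monValue, ← hx,
    ← Finset.prod_filter_mul_prod_filter_not Finset.univ (fun j : Fin l => (j : ℕ) < m)
      (fun j => r j.succ ^ (n' j)),
    ← Finset.prod_filter_mul_prod_filter_not Finset.univ (fun j : Fin l => (j : ℕ) < m)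
      (fun j => r j.succ ^ (n j))]
  calc v (b' : k) * x ^ ((negDeg l m n' : ℕ) : ℤ) *
        ((∏ j ∈ S, r j.succ ^ (n' j)) *
          ∏ j ∈ Finset.univ.filter (fun j : Fin l => ¬ (j : ℕ) < m), r j.succ ^ (n' j))
      ≤ (v (b : k) * x ^ ((negDeg l m n : ℕ) : ℤ) * x ^ ((negDeg l m (n' - n) : ℕ) : ℤ)) *
        ((∏ j ∈ S, r j.succ ^ (n' j)) *
          ∏ j ∈ Finset.univ.filter (fun j : Fin l => ¬ (j : ℕ) < m), r j.succ ^ (n' j)) :=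
        mul_le_mul_left hii' _
    _ = (v (b : k) * x ^ ((negDeg l m n : ℕ) : ℤ)) *
        ((x ^ ((negDeg l m (n' - n) : ℕ) : ℤ) * ∏ j ∈ S, r j.succ ^ (n' j)) *
          ∏ j ∈ Finset.univ.filter (fun j : Fin l => ¬ (j : ℕ) < m), r j.succ ^ (n' j)) := by
        ring
    _ ≤ (v (b : k) * x ^ ((negDeg l m n : ℕ) : ℤ)) *
        ((∏ j ∈ S, r j.succ ^ (n j)) *
          ∏ j ∈ Finset.univ.filter (fun j : Fin l => ¬ (j : ℕ) < m), r j.succ ^ (n j)) :=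
        mul_le_mul_right (mul_le_mul' claim2 claim1) _

lemma cond_i_of_ineq (hπ : π ≠ 0) (b b' : v.integer) (hb : b ≠ 0) (hb' : b' ≠ 0)
    (n n' : Fin l → ℤ) (hn : IsSpecialIndex l m n) (hn' : IsSpecialIndex l m n')
    (h : ∀ r ∈ Delta v l m π, monValue v l m π b' n' r ≤ monValue v l m π b n r)
    (j₀ : Fin l) (hj₀ : m ≤ (j₀ : ℕ)) : n j₀ ≤ n' j₀ := by
  classical
  by_contra hlt
  push_neg at hlt
  have hπk : v (π : k) ≠ 0 := coe_pi_ne_zero v π hπ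
  have hπ1 : v (π : k) ≤ 1 := (Valuation.mem_integer_iff v (π : k)).mp π.2
  set u := v (b : k) * v (π : k) ^ ((negDeg l m n : ℕ) : ℤ) with hu_def
  set u' := v (b' : k) * v (π : k) ^ ((negDeg l m n' : ℕ) : ℤ) with hu'_def
  have hu : u ≠ 0 := mul_ne_zero
    (by rw [Valuation.ne_zero_iff]; exact fun hh => hb (Subtype.ext hh)) (zpow_ne_zero _ hπk)
  have hu' : u' ≠ 0 := mul_ne_zero
    (by rw [Valuation.ne_zero_iff]; exact fun hh => hb' (Subtype.ext hh)) (zpow_ne_zero _ hπk)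
  set ε : ℝ≥0 := min 1 (u' / (2 * u)) with hε_def
  have hε1 : ε ≤ 1 := min_le_left _ _
  have hεpos : ε ≠ 0 := by
    apply ne_of_gt
    apply lt_min one_pos
    exact pos_iff_ne_zero.mpr (div_ne_zero hu' (by simp [hu]))
  set r : Fin (l + 1) → ℝ≥0 :=
    fun i => if i = 0 then v (π : k) else if i = j₀.succ then ε else 1 with hr_def
  have hrΔ : r ∈ Delta v l m π := by
    refine ⟨fun i => ?_, ?_⟩
    · rw [hr_def]
      dsimp only
      split_ifs
      · exact hπ1
      · exact hε1
      · exact le_refl 1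
    · rw [prod_filter_le_split]
      have h0 : r 0 = v (π : k) := by simp [hr_def]
      have h1 : ∀ j : Fin l, (if (j : ℕ) < m then r j.succ else 1) = 1 := by
        intro j
        by_cases hc : (j : ℕ) < m
        · rw [if_pos hc, hr_def]
          have hne0 : (j.succ : Fin (l + 1)) ≠ 0 := Fin.succ_ne_zero j
          have hnej : (j.succ : Fin (l + 1)) ≠ j₀.succ := by
            intro hcc
            have := Fin.succ_injective _ hcc
            subst this
            omega
          simp [hne0, hnej]
        · rw [if_neg hc]
      rw [h0, Finset.prod_congr rfl fun j _ => h1 j]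
      simp
  have hprod : ∀ e : Fin l → ℤ, ∏ j : Fin l, r j.succ ^ (e j) = ε ^ (e j₀) := by
    intro e
    rw [Finset.prod_eq_single j₀]
    · have : r j₀.succ = ε := by simp [hr_def, Fin.succ_ne_zero j₀]
      rw [this]
    · intro j _ hj
      have hne0 : (j.succ : Fin (l + 1)) ≠ 0 := Fin.succ_ne_zero j
      have hnej : (j.succ : Fin (l + 1)) ≠ j₀.succ := fun hc => hj (Fin.succ_injective _ hc)
      have : r j.succ = 1 := by simp [hr_def, hne0, hnej]
      rw [this, one_zpow]
    · simp
  have spec := h r hrΔ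
  rw [monValue, monValue, hprod, hprod, ← hu_def, ← hu'_def] at spec
  -- spec : u' * ε ^ (n' j₀) ≤ u * ε ^ (n j₀)
  have hn'0 := hn' j₀ hj₀
  have hn0 := hn j₀ hj₀
  set a' : ℕ := (n' j₀).toNat with ha'
  set a : ℕ := (n j₀).toNat with ha
  have ea' : ε ^ (n' j₀) = ε ^ a' := by rw [← zpow_natCast]; congr 1; omega
  have ea : ε ^ (n j₀) = ε ^ a := by rw [← zpow_natCast]; congr 1; omega
  rw [ea, ea'] at spec
  have haa : a' + 1 ≤ a := by omega
  have hstep : u * ε ^ a ≤ u * (ε ^ (a' + 1)) :=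
    mul_le_mul_right (pow_le_pow_of_le_one zero_le hε1 haa) u
  have hcancel : u' ≤ u * ε := by
    have h2 : u' * ε ^ a' ≤ (u * ε) * ε ^ a' := by
      calc u' * ε ^ a' ≤ u * ε ^ a := spec
        _ ≤ u * ε ^ (a' + 1) := hstep
        _ = (u * ε) * ε ^ a' := by rw [pow_succ]; ring
    exact le_of_mul_le_mul_right h2 (pos_iff_ne_zero.mpr (pow_ne_zero _ hεpos))
  have hfin : u * ε ≤ u' / 2 := by
    calc u * ε ≤ u * (u' / (2 * u)) := mul_le_mul_right (min_le_right _ _) u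
      _ = u' / 2 := by field_simp
  have : u' < u' := lt_of_le_of_lt (hcancel.trans hfin) (NNReal.half_lt_self hu')
  exact lt_irrefl _ this

lemma cond_ii_of_ineq (hπ : π ≠ 0) (b b' : v.integer)
    (n n' : Fin l → ℤ)
    (h : ∀ r ∈ Delta v l m π, monValue v l m π b' n' r ≤ monValue v l m π b n r) :
    v (b' : k) * v (π : k) ^ negDeg l m n'
      ≤ v (b : k) * v (π : k) ^ (negDeg l m n + negDeg l m (n' - n)) := by
  classical
  have hπk : v (π : k) ≠ 0 := coe_pi_ne_zero v π hπ
  have hπ1 : v (π : k) ≤ 1 := (Valuation.mem_integer_iff v (π : k)).mp π.2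
  by_cases hS : negDeg l m (n' - n) = 0
  · set r : Fin (l + 1) → ℝ≥0 := fun i => if i = 0 then v (π : k) else 1 with hr_def
    have hrΔ : r ∈ Delta v l m π := by
      refine ⟨fun i => ?_, ?_⟩
      · rw [hr_def]
        dsimp only
        split_ifs
        · exact hπ1
        · exact le_refl 1
      · rw [prod_filter_le_split]
        have h0 : r 0 = v (π : k) := by simp [hr_def]
        have h1 : ∀ j : Fin l, (if (j : ℕ) < m then r j.succ else 1) = 1 := by
          intro j
          by_cases hc : (j : ℕ) < m
          · rw [if_pos hc, hr_def]
            simp [Fin.succ_ne_zero j]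
          · rw [if_neg hc]
        rw [h0, Finset.prod_congr rfl fun j _ => h1 j]
        simp
    have spec := h r hrΔ
    have hprod : ∀ e : Fin l → ℤ, ∏ j : Fin l, r j.succ ^ (e j) = 1 := by
      intro e
      refine Finset.prod_eq_one fun j _ => ?_
      have : r j.succ = 1 := by simp [hr_def, Fin.succ_ne_zero j]
      rw [this, one_zpow]
    rw [monValue, monValue, hprod, hprod, mul_one, mul_one, zpow_natCast, zpow_natCast] at spec
    rw [hS, add_zero]
    exact spec
  · have hne : (Finset.univ.filter (fun j : Fin l => (j : ℕ) < m)).Nonempty := by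
      by_contra hcon
      rw [Finset.not_nonempty_iff_eq_empty] at hcon
      rw [negDeg, hcon, Finset.sup_empty] at hS
      exact hS rfl
    obtain ⟨j₀, hj₀mem, hj₀⟩ :=
      Finset.exists_mem_eq_sup _ hne (fun j : Fin l => (-(n' - n) j).toNat)
    have hj₀m : (j₀ : ℕ) < m := (Finset.mem_filter.mp hj₀mem).2
    have hj₀sup : negDeg l m (n' - n) = (n j₀ - n' j₀).toNat := by
      rw [negDeg, hj₀]
      congr 1
      simp [Pi.sub_apply]
    set r : Fin (l + 1) → ℝ≥0 := fun i => if i = j₀.succ then v (π : k) else 1 with hr_def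
    have hrΔ : r ∈ Delta v l m π := by
      refine ⟨fun i => ?_, ?_⟩
      · rw [hr_def]
        dsimp only
        split_ifs
        · exact hπ1
        · exact le_refl 1
      · rw [prod_filter_le_split]
        have h0 : r 0 = 1 := by simp [hr_def, (Fin.succ_ne_zero j₀).symm]
        rw [h0, one_mul, Finset.prod_eq_single j₀]
        · simp [hr_def, hj₀m]
        · intro j _ hj
          by_cases hc : (j : ℕ) < m
          · rw [if_pos hc, hr_def]
            have : (j.succ : Fin (l + 1)) ≠ j₀.succ := fun hcc => hj (Fin.succ_injective _ hcc)
            simp [this]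
          · rw [if_neg hc]
        · simp
    have spec := h r hrΔ
    have hprod : ∀ e : Fin l → ℤ, ∏ j : Fin l, r j.succ ^ (e j) = v (π : k) ^ (e j₀) := by
      intro e
      rw [Finset.prod_eq_single j₀]
      · have : r j₀.succ = v (π : k) := by simp [hr_def]
        rw [this]
      · intro j _ hj
        have : r j.succ = 1 := by
          have hne' : (j.succ : Fin (l + 1)) ≠ j₀.succ := fun hc => hj (Fin.succ_injective _ hc)
          simp [hr_def, hne']
        rw [this, one_zpow]
      · simp
    rw [monValue, monValue, hprod, hprod, mul_assoc, mul_assoc,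
      ← zpow_add₀ hπk, ← zpow_add₀ hπk] at spec
    -- spec : v b' * vπ ^ (D' + n' j₀) ≤ v b * vπ ^ (D + n j₀)
    have goal' : v (b' : k) * v (π : k) ^ ((negDeg l m n' : ℕ) : ℤ)
        ≤ v (b : k) * v (π : k) ^ ((negDeg l m n + negDeg l m (n' - n) : ℕ) : ℤ) := by
      refine zpow_cancel_le hπk ?_ spec
      have hd : (negDeg l m (n' - n) : ℤ) = n j₀ - n' j₀ := by
        rw [hj₀sup] at hS ⊢
        omega
      push_cast
      omega
    rwa [zpow_natCast, zpow_natCast] at goal'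

end Altered

namespace Altered

/-!
STATEMENT 6: for special monomials a = a_n t^n, a' = a'_{n'} t^{n'} in
A = k°[t₀,…,t_l]/(t₀⋯t_m − π) (coefficients a_n = b·π^{D(n)}, a'_{n'} = b'·π^{D(n')}),
divisibility a' ∈ aA holds iff |a|_r ≥ |a'|_r for all r in
Δ = {r ∈ [0,1]^{l+1} : r₀⋯r_m = |π|}, where |a_n t^n|_r = |a_n|·r₁^{n₁}⋯r_l^{n_l}.
-/

theorem specialMonomial_dvd_iff_delta
    {k : Type*} [Field k] (v : Valuation k ℝ≥0)
    (hv : ∃ x : k, v x ≠ 0 ∧ v x ≠ 1)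
    (l m : ℕ) (hm : m ≤ l) (π : v.integer) (hπ : π ≠ 0)
    (b b' : v.integer) (hb : b ≠ 0) (hb' : b' ≠ 0)
    (n n' : Fin l → ℤ) (hn : IsSpecialIndex l m n) (hn' : IsSpecialIndex l m n') :
    specialMonomial v l m π b' n' ∈ Ideal.span {specialMonomial v l m π b n} ↔
      ∀ r ∈ Delta v l m π, monValue v l m π b' n' r ≤ monValue v l m π b n r := by
  rw [Ideal.mem_span_singleton']
  refine (show (∃ a, a * specialMonomial v l m π b n = specialMonomial v l m π b' n') ↔
      specialMonomial v l m π b n ∣ specialMonomial v l m π b' n' from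
    ⟨fun ⟨a, ha⟩ => ⟨a, by rw [← ha]; exact mul_comm (a : ModelRing v l m π) _⟩, fun ⟨a, ha⟩ => ⟨a, by rw [ha]; exact mul_comm (a : ModelRing v l m π) _⟩⟩).trans ?_
  constructor
  · intro hdvd r hr
    exact monValue_le_of_conditions v l m π hπ b b' n n' hn hn'
      (fun j hj => cond_i_of_dvd v l m π hπ b b' hb hb' n n' hn hn' hdvd j hj)
      (cond_ii_of_dvd v l m π hπ b b' n n' hdvd) r hr
  · intro h
    exact dvd_of_conditions v l m π hπ b b' hb n n' hn hn'
      (fun j hj => cond_i_of_ineq v l m π hπ b b' hb hb' n n' hn hn' h j hj)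
      (cond_ii_of_ineq v l m π hπ b b' n n' h)

end Altered
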